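/- For an affine subspace H of dimension d in a Z/2Z-vector space, the quotient K_p(H)/K_{p+1}(H) is isomorphic to the p-th exterior power ⋀^p T(H) of the linear subspace T(H) parallel to H, via the map sending the class of w_G (for G ∈ Aff_p(H)) to v_1 ∧ ... ∧ v_p where v_1, ..., v_p is a basis of the direction T(G). -/

import Mathlib

set_option maxHeartbeats 1000000
set_option synthInstance.maxHeartbeats 400000
set_option linter.unusedSectionVars false
set_option linter.unusedVariables false
set_option linter.unusedTactic false

open Module Submodule Set
open scoped symmDiff


/-- `G` is an affine subspace of dimension `p` of the `ZMod 2`-vector space `V`. -/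
def IsAffineOfDim {V : Type*} [AddCommGroup V] [Module (ZMod 2) V] (p : ℕ) (G : Set V) : Prop :=
  ∃ (a : V) (W : Submodule (ZMod 2) V),
    Module.finrank (ZMod 2) W = p ∧ G = (a + ·) '' (W : Set V)

/-- The indicator vector `w_G = ∑_{ε ∈ G} w_ε` in the free `ZMod 2`-vector space on `V`
(realized, for finite `V`, as the function space `V → ZMod 2` with basis the delta
functions `w_ε`). -/
noncomputable def wvec {V : Type*} (G : Set V) : V → ZMod 2 :=
  Set.indicator G (fun _ => (1 : ZMod 2))

/-- `K_p(H)`: the span of the vectors `w_G` over all `p`-dimensional affine subspaces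
`G ⊆ H`. -/
noncomputable def Kp {V : Type*} [AddCommGroup V] [Module (ZMod 2) V]
    (p : ℕ) (H : Set V) : Submodule (ZMod 2) (V → ZMod 2) :=
  Submodule.span (ZMod 2) {w | ∃ G : Set V, IsAffineOfDim p G ∧ G ⊆ H ∧ w = wvec G}

namespace KpProof
attribute [local instance] Classical.propDecidable

lemma zmod2_cases (c : ZMod 2) : c = 0 ∨ c = 1 := by revert c; decide

lemma addself {M : Type*} [AddCommGroup M] [Module (ZMod 2) M] (x : M) : x + x = 0 := by
  have h : ((2 : ZMod 2)) • x = 0 := by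
    rw [show (2 : ZMod 2) = 0 by decide, zero_smul]
  rwa [two_smul] at h

variable {V : Type*} [AddCommGroup V] [Module (ZMod 2) V]

def flat (b : V) (U : Submodule (ZMod 2) V) : Set V := (b + ·) '' (U : Set V)

lemma mem_flat {b z : V} {U : Submodule (ZMod 2) V} : z ∈ flat b U ↔ b + z ∈ U := by
  constructor
  · rintro ⟨u, hu, rfl⟩
    have : b + (b + u) = u := by rw [← add_assoc, addself, zero_add]
    rwa [this]
  · intro h
    exact ⟨b + z, h, show b + (b + z) = z by rw [← add_assoc, addself, zero_add]⟩

lemma wvec_apply (G : Set V) (z : V) : wvec G z = if z ∈ G then 1 else 0 := by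
  classical
  simp [wvec, Set.indicator_apply]

lemma wvec_add_self (G : Set V) : wvec G + wvec G = 0 := addself _

lemma flat_mono {b : V} {U U' : Submodule (ZMod 2) V} (h : U ≤ U') :
    flat b U ⊆ flat b U' := fun z hz => mem_flat.2 (h (mem_flat.1 hz))

lemma mem_sup_span_iff (U : Submodule (ZMod 2) V) (x z : V) :
    z ∈ Submodule.span (ZMod 2) {x} ⊔ U ↔ z ∈ U ∨ z + x ∈ U := by
  constructor
  · intro h
    rcases Submodule.mem_sup.1 h with ⟨y, hy, u, hu, rfl⟩
    rcases Submodule.mem_span_singleton.1 hy with ⟨c, rfl⟩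
    rcases zmod2_cases c with rfl | rfl
    · left; rwa [zero_smul, zero_add]
    · right
      rw [one_smul]
      have : x + u + x = u := by rw [add_comm x u, add_assoc, addself, add_zero]
      rwa [this]
  · rintro (h | h)
    · exact Submodule.mem_sup_right h
    · have : z = x + (z + x) := by rw [add_comm x, add_assoc, addself, add_zero]
      rw [this]
      exact Submodule.add_mem _ (Submodule.mem_sup_left (Submodule.mem_span_singleton_self x))
        (Submodule.mem_sup_right h)

variable {a : V} {W : Submodule (ZMod 2) V} {H : Set V}

lemma a_mem_H (hH : H = flat a W) : a ∈ H := by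
  rw [hH]; exact mem_flat.2 (by rw [addself]; exact W.zero_mem)

lemma mem_H_iff (hH : H = flat a W) {z : V} : z ∈ H ↔ a + z ∈ W := by
  rw [hH]; exact mem_flat

lemma flat_subset_H (hH : H = flat a W) {b : V} {U : Submodule (ZMod 2) V}
    (hb : b ∈ H) (hUW : U ≤ W) : flat b U ⊆ H := by
  intro z hz
  rw [mem_H_iff hH]
  have h1 : a + b ∈ W := (mem_H_iff hH).1 hb
  have h2 : b + z ∈ W := hUW (mem_flat.1 hz)
  have : a + z = (a + b) + (b + z) := by
    rw [add_assoc, ← add_assoc b b z, addself, zero_add]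
  rw [this]; exact W.add_mem h1 h2

lemma direction_le (hH : H = flat a W) {b : V} {U : Submodule (ZMod 2) V}
    (h : flat b U ⊆ H) : b ∈ H ∧ U ≤ W := by
  have hb : b ∈ H := h (mem_flat.2 (by rw [addself]; exact U.zero_mem))
  refine ⟨hb, fun u hu => ?_⟩
  have h1 : a + b ∈ W := (mem_H_iff hH).1 hb
  have h2 : a + (b + u) ∈ W := (mem_H_iff hH).1 (h (mem_flat.2 (by
    rw [← add_assoc, addself, zero_add]; exact hu)))
  have : u = (a + b) + (a + (b + u)) := by
    rw [← add_assoc, add_comm (a+b) a, add_assoc a, ← add_assoc (a+b), add_assoc a b, addself,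
      add_zero]
    rw [← add_assoc, addself, zero_add]
  rw [this]; exact W.add_mem h1 h2

lemma gen_mem (hH : H = flat a W) {p : ℕ} {b : V} {U : Submodule (ZMod 2) V}
    (hU : Module.finrank (ZMod 2) U = p) (hsub : flat b U ⊆ H) :
    wvec (flat b U) ∈ Kp p H :=
  Submodule.subset_span ⟨flat b U, ⟨b, U, hU, rfl⟩, hsub, rfl⟩


section Fin
variable [Fintype V]


example : FiniteDimensional (ZMod 2) V := inferInstance

lemma finrank_span_range_le {ι : Type*} [Fintype ι] (f : ι → V) {n : ℕ}
    (h : Fintype.card ι ≤ n) :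
    Module.finrank (ZMod 2) (Submodule.span (ZMod 2) (Set.range f)) ≤ n := by
  classical
  refine le_trans (finrank_span_le_card (Set.range f)) (le_trans ?_ h)
  rw [Set.toFinset_range]
  exact le_trans (Finset.card_image_le) (by simp)

lemma finrank_sup_span_singleton {U : Submodule (ZMod 2) V} {x : V} (hx : x ∉ U) :
    Module.finrank (ZMod 2) ↥(Submodule.span (ZMod 2) {x} ⊔ U)
      = Module.finrank (ZMod 2) U + 1 := by
  have hxne : x ≠ 0 := fun h => hx (h ▸ U.zero_mem)
  refine le_antisymm ?_ ?_
  · have := Submodule.finrank_sup_add_finrank_inf_eq (Submodule.span (ZMod 2) {x}) U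
    have h1 : Module.finrank (ZMod 2) (Submodule.span (ZMod 2) {x}) = 1 :=
      finrank_span_singleton hxne
    omega
  · have hlt : U < Submodule.span (ZMod 2) {x} ⊔ U := by
      refine lt_of_le_of_ne le_sup_right (fun h => hx ?_)
      rw [h]
      exact Submodule.mem_sup_left (Submodule.mem_span_singleton_self x)
    exact Submodule.finrank_lt_finrank_of_lt hlt



lemma add_pair (x y z : V) : y + z = (x + y) + (x + z) := by
  rw [add_add_add_comm, addself, zero_add]

lemma flat_eq_of_diff_mem {b c : V} {U : Submodule (ZMod 2) V} (h : b + c ∈ U) :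
    flat b U = flat c U := by
  ext z
  rw [mem_flat, mem_flat]
  constructor
  · intro hz
    have : c + z = (b + c) + (b + z) := by
      rw [add_comm b c, add_assoc, ← add_assoc b b, addself, zero_add]
    rw [this]; exact U.add_mem h hz
  · intro hz
    have : b + z = (b + c) + (c + z) := by
      rw [add_assoc, ← add_assoc c c, addself, zero_add]
    rw [this]; exact U.add_mem h hz

lemma wvec_flat_add_of_not_mem {b c : V} {U : Submodule (ZMod 2) V} (h : b + c ∉ U) :
    wvec (flat b U) + wvec (flat c U)
      = wvec (flat b (Submodule.span (ZMod 2) {b + c} ⊔ U)) := by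
  funext z
  have h1 : z ∈ flat b (Submodule.span (ZMod 2) {b+c} ⊔ U) ↔ (b + z ∈ U ∨ c + z ∈ U) := by
    rw [mem_flat, mem_sup_span_iff]
    have : b + z + (b + c) = c + z := by
      rw [add_comm b z, add_assoc, ← add_assoc b b, addself, zero_add, add_comm z c]
    rw [this]
  have hne : ¬ (b + z ∈ U ∧ c + z ∈ U) := by
    rintro ⟨h2, h3⟩
    have : b + c = (b + z) + (c + z) := by
      rw [add_comm c z, ← add_assoc, add_assoc b z z, addself, add_zero]
    exact h (this ▸ U.add_mem h2 h3)
  simp only [Pi.add_apply, wvec_apply, mem_flat, h1]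
  by_cases h2 : b + z ∈ U <;> by_cases h3 : c + z ∈ U
  · exact absurd ⟨h2, h3⟩ hne
  all_goals simp [h2, h3]

lemma translate_mem (hH : H = flat a W) {p : ℕ} {b c : V} {U : Submodule (ZMod 2) V}
    (hU : Module.finrank (ZMod 2) U = p) (hb : flat b U ⊆ H) (hc : flat c U ⊆ H) :
    wvec (flat b U) + wvec (flat c U) ∈ Kp (p + 1) H := by
  by_cases hbc : b + c ∈ U
  · rw [flat_eq_of_diff_mem hbc, addself]
    exact Submodule.zero_mem _
  · rw [wvec_flat_add_of_not_mem hbc]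
    have hUW : U ≤ W := (direction_le hH hb).2
    have hbcW : b + c ∈ W := by
      have h1 := (mem_H_iff hH).1 (direction_le hH hb).1
      have h2 := (mem_H_iff hH).1 (direction_le hH hc).1
      rw [add_pair a b c]; exact W.add_mem h1 h2
    have hle : Submodule.span (ZMod 2) {b + c} ⊔ U ≤ W :=
      sup_le ((Submodule.span_le).2 (Set.singleton_subset_iff.2 hbcW)) hUW
    have hrk : Module.finrank (ZMod 2) ↥(Submodule.span (ZMod 2) {b+c} ⊔ U) = p + 1 := by
      rw [finrank_sup_span_singleton hbc, hU]
    exact gen_mem hH hrk (flat_subset_H hH (direction_le hH hb).1 hle)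

lemma span_range_coe_le {U : Submodule (ZMod 2) V} {ι : Type*} (f : ι → ↥U) :
    Submodule.span (ZMod 2) (Set.range fun i => ((f i : ↥U) : V)) ≤ U := by
  rw [Submodule.span_le]
  rintro _ ⟨i, rfl⟩
  exact (f i).2

lemma Kp_succ_le (hH : H = flat a W) (p : ℕ) : Kp (p + 1) H ≤ Kp p H := by
  rw [Kp, Submodule.span_le]
  rintro _ ⟨G, ⟨b, U, hU, rfl⟩, hsub, rfl⟩
  have hsub : flat b U ⊆ H := hsub
  haveI : FiniteDimensional (ZMod 2) ↥U := inferInstance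
  let B : Basis (Fin (p + 1)) (ZMod 2) ↥U := finBasisOfFinrankEq (ZMod 2) ↥U hU
  set u : V := (B (Fin.last p) : V) with hu_def
  set U' : Submodule (ZMod 2) V :=
    Submodule.span (ZMod 2) (Set.range fun i : Fin p => (B i.castSucc : V)) with hU'_def
  have hindV : LinearIndependent (ZMod 2) (fun i : Fin (p+1) => (B i : V)) := by
    have := B.linearIndependent
    exact this.map' U.subtype (Submodule.ker_subtype U)
  have hind : LinearIndependent (ZMod 2) (fun i : Fin p => (B i.castSucc : V)) :=
    hindV.comp Fin.castSucc (Fin.castSucc_injective p)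
  have hU'rk : Module.finrank (ZMod 2) ↥U' = p := by
    rw [hU'_def, finrank_span_eq_card hind, Fintype.card_fin]
  have hU'le : U' ≤ U := span_range_coe_le _
  have hu_mem : u ∈ U := (B (Fin.last p)).2
  have hu_not : u ∉ U' := by
    have hrange : (Set.range fun i : Fin p => (B i.castSucc : V))
        = (fun i : Fin (p+1) => (B i : V)) '' (Set.range Fin.castSucc) := by
      rw [← Set.range_comp]; rfl
    rw [hU'_def, hrange]
    refine hindV.notMem_span_image ?_
    rintro ⟨i, hi⟩
    exact absurd hi (Fin.castSucc_lt_last i).ne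
  have hsup : Submodule.span (ZMod 2) {u} ⊔ U' = U := by
    refine le_antisymm (sup_le ((Submodule.span_le).2 (Set.singleton_subset_iff.2 hu_mem))
      hU'le) ?_
    intro x hx
    have hxx : (∑ i, (B.repr ⟨x, hx⟩ i) • (B i : V)) = x := by
      have := congrArg (Subtype.val) (B.sum_repr ⟨x, hx⟩)
      simp only [Submodule.coe_sum, Submodule.coe_smul] at this
      exact this
    rw [← hxx, Fin.sum_univ_castSucc]
    refine Submodule.add_mem _ (Submodule.mem_sup_right (Submodule.sum_mem _ fun i _ =>
      Submodule.smul_mem _ _ (Submodule.subset_span ⟨i, rfl⟩))) ?_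
    exact Submodule.mem_sup_left (Submodule.smul_mem _ _ (Submodule.mem_span_singleton_self u))
  -- decomposition
  have hdecomp : wvec (flat b U) = wvec (flat b U') + wvec (flat (b + u) U') := by
    rw [wvec_flat_add_of_not_mem (by
      have : b + (b + u) = u := by rw [← add_assoc, addself, zero_add]
      rw [this]; exact hu_not)]
    have : b + (b + u) = u := by rw [← add_assoc, addself, zero_add]
    rw [this, hsup]
  have hb : b ∈ H := (direction_le hH hsub).1
  have hUW : U ≤ W := (direction_le hH hsub).2
  have hbu : b + u ∈ H := hsub (mem_flat.2 (by
    have : b + (b + u) = u := by rw [← add_assoc, addself, zero_add]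
    rw [this]; exact hu_mem))
  change wvec (flat b U) ∈ (Kp p H : Set (V → ZMod 2))
  rw [hdecomp]
  exact Submodule.add_mem _
    (gen_mem hH hU'rk (flat_subset_H hH hb (le_trans hU'le hUW)))
    (gen_mem hH hU'rk (flat_subset_H hH hbu (le_trans hU'le hUW)))

lemma three_term {O : Submodule (ZMod 2) V} {x y : V}
    (hx : x ∉ O) (hy : y ∉ O) (hxy : x + y ∉ O) (b : V) :
    wvec (flat b (Submodule.span (ZMod 2) {x + y} ⊔ O))
      + wvec (flat b (Submodule.span (ZMod 2) {x} ⊔ O))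
      + wvec (flat b (Submodule.span (ZMod 2) {y} ⊔ O))
    = wvec (flat b (Submodule.span (ZMod 2) {x} ⊔ (Submodule.span (ZMod 2) {y} ⊔ O))) := by
  funext z
  set t := b + z with ht
  have e1 : z ∈ flat b (Submodule.span (ZMod 2) {x} ⊔ O) ↔ (t ∈ O ∨ t + x ∈ O) := by
    rw [mem_flat, mem_sup_span_iff]
  have e2 : z ∈ flat b (Submodule.span (ZMod 2) {y} ⊔ O) ↔ (t ∈ O ∨ t + y ∈ O) := by
    rw [mem_flat, mem_sup_span_iff]
  have e3 : z ∈ flat b (Submodule.span (ZMod 2) {x+y} ⊔ O) ↔ (t ∈ O ∨ t + (x + y) ∈ O) := by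
    rw [mem_flat, mem_sup_span_iff]
  have e4 : z ∈ flat b (Submodule.span (ZMod 2) {x} ⊔ (Submodule.span (ZMod 2) {y} ⊔ O))
      ↔ ((t ∈ O ∨ t + y ∈ O) ∨ (t + x ∈ O ∨ t + x + y ∈ O)) := by
    rw [mem_flat, mem_sup_span_iff, mem_sup_span_iff, mem_sup_span_iff]
  have hterm : t + x + y = t + (x + y) := by rw [add_assoc]
  -- pairwise exclusivity
  have p12 : ¬(t ∈ O ∧ t + x ∈ O) := fun ⟨h1, h2⟩ => hx (by
    have : x = t + (t + x) := by rw [← add_assoc, addself, zero_add]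
    rw [this]; exact O.add_mem h1 h2)
  have p13 : ¬(t ∈ O ∧ t + y ∈ O) := fun ⟨h1, h2⟩ => hy (by
    have : y = t + (t + y) := by rw [← add_assoc, addself, zero_add]
    rw [this]; exact O.add_mem h1 h2)
  have p14 : ¬(t ∈ O ∧ t + (x + y) ∈ O) := fun ⟨h1, h2⟩ => hxy (by
    have : x + y = t + (t + (x + y)) := by rw [← add_assoc, addself, zero_add]
    rw [this]; exact O.add_mem h1 h2)
  have p23 : ¬(t + x ∈ O ∧ t + y ∈ O) := fun ⟨h1, h2⟩ => hxy (by
    rw [add_pair t x y]; exact O.add_mem h1 h2)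
  have p24 : ¬(t + x ∈ O ∧ t + (x + y) ∈ O) := fun ⟨h1, h2⟩ => hy (by
    have h2' : (t + x) + y ∈ O := by rwa [add_assoc]
    have : y = (t + x) + ((t + x) + y) := by rw [← add_assoc, addself, zero_add]
    rw [this]; exact O.add_mem h1 h2')
  have p34 : ¬(t + y ∈ O ∧ t + (x + y) ∈ O) := fun ⟨h1, h2⟩ => hx (by
    have h2' : (t + y) + x ∈ O := by rwa [add_comm x y, ← add_assoc] at h2
    have : x = (t + y) + ((t + y) + x) := by rw [← add_assoc, addself, zero_add]
    rw [this]; exact O.add_mem h1 h2')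
  simp only [Pi.add_apply, wvec_apply, e1, e2, e3, e4, hterm]
  by_cases h1 : t ∈ O
  · have h2 : t + x ∉ O := fun h => p12 ⟨h1, h⟩
    have h3 : t + y ∉ O := fun h => p13 ⟨h1, h⟩
    have h4 : t + (x + y) ∉ O := fun h => p14 ⟨h1, h⟩
    simp [h1, h2, h3, h4]
    decide
  · by_cases h2 : t + x ∈ O
    · have h3 : t + y ∉ O := fun h => p23 ⟨h2, h⟩
      have h4 : t + (x + y) ∉ O := fun h => p24 ⟨h2, h⟩
      simp [h1, h2, h3, h4]
    · by_cases h3 : t + y ∈ O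
      · have h4 : t + (x + y) ∉ O := fun h => p34 ⟨h3, h⟩
        simp [h1, h2, h3, h4]
      · by_cases h4 : t + (x + y) ∈ O <;> simp [h1, h2, h3, h4]

lemma neg_eq_self' {M : Type*} [AddCommGroup M] [Module (ZMod 2) M] (x : M) : -x = x :=
  neg_eq_of_add_eq_zero_left (addself x)

abbrev Qt (p : ℕ) (H : Set V) :=
  ↥(Kp p H) ⧸ (Kp (p + 1) H).comap (Kp p H).subtype

noncomputable def qcl (hH : H = flat a W) (p : ℕ) (U : Submodule (ZMod 2) V) : Qt p H :=
  if h : Module.finrank (ZMod 2) U = p ∧ U ≤ W then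
    Submodule.Quotient.mk ⟨wvec (flat a U),
      gen_mem hH h.1 (flat_subset_H hH (a_mem_H hH) h.2)⟩
  else 0

lemma qcl_rank_ne (hH : H = flat a W) {p : ℕ} {U : Submodule (ZMod 2) V}
    (h : Module.finrank (ZMod 2) U ≠ p) : qcl hH p U = 0 :=
  dif_neg (fun hc => h hc.1)

lemma qcl_eq (hH : H = flat a W) {p : ℕ} {U : Submodule (ZMod 2) V}
    (h1 : Module.finrank (ZMod 2) U = p) (h2 : U ≤ W) :
    qcl hH p U = Submodule.Quotient.mk ⟨wvec (flat a U),
      gen_mem hH h1 (flat_subset_H hH (a_mem_H hH) h2)⟩ :=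
  dif_pos ⟨h1, h2⟩

noncomputable def psi0Fun (hH : H = flat a W) (p : ℕ) (v : Fin p → ↥W) : Qt p H :=
  qcl hH p (Submodule.span (ZMod 2) (Set.range fun i => ((v i : ↥W) : V)))

def othersSpan {p : ℕ} (v : Fin p → ↥W) (i : Fin p) : Submodule (ZMod 2) V :=
  Submodule.span (ZMod 2) (Set.range fun j : {j : Fin p // j ≠ i} => ((v j : ↥W) : V))

lemma othersSpan_le_W {p : ℕ} (v : Fin p → ↥W) (i : Fin p) : othersSpan v i ≤ W := by
  rw [othersSpan, Submodule.span_le]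
  rintro _ ⟨j, rfl⟩
  exact (v (j : Fin p)).2

lemma card_ne_sub (p : ℕ) (i : Fin p) : Fintype.card {j : Fin p // j ≠ i} = p - 1 := by
  simp [Fintype.card_subtype_compl]

lemma othersSpan_rank_lt {p : ℕ} (v : Fin p → ↥W) (i : Fin p) :
    Module.finrank (ZMod 2) ↥(othersSpan v i) < p := by
  have h := finrank_span_range_le (fun j : {j : Fin p // j ≠ i} => ((v j : ↥W) : V))
    (le_of_eq (card_ne_sub p i))
  exact lt_of_le_of_lt h (Nat.sub_lt i.pos one_pos)

lemma range_update_coe {p : ℕ} [DecidableEq (Fin p)] (v : Fin p → ↥W) (i : Fin p) (z : ↥W) :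
    (Set.range fun j => ((Function.update v i z j : ↥W) : V))
      = insert (z : V) (Set.range fun j : {j : Fin p // j ≠ i} => ((v j : ↥W) : V)) := by
  ext w
  simp only [Set.mem_range, Set.mem_insert_iff]
  constructor
  · rintro ⟨j, rfl⟩
    by_cases hj : j = i
    · subst hj; rw [Function.update_self]; exact Or.inl rfl
    · exact Or.inr ⟨⟨j, hj⟩, by rw [Function.update_of_ne hj]⟩
  · rintro (rfl | ⟨⟨j, hj⟩, rfl⟩)
    · exact ⟨i, by rw [Function.update_self]⟩
    · exact ⟨j, by rw [Function.update_of_ne hj]⟩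

lemma psi0Fun_update (hH : H = flat a W) {p : ℕ} [DecidableEq (Fin p)]
    (v : Fin p → ↥W) (i : Fin p) (z : ↥W) :
    psi0Fun hH p (Function.update v i z)
      = qcl hH p (Submodule.span (ZMod 2) {(z : V)} ⊔ othersSpan v i) := by
  rw [psi0Fun, range_update_coe, Submodule.span_insert, othersSpan]

noncomputable def psi0 (hH : H = flat a W) (p : ℕ) :
    (↥W) [⋀^Fin p]→ₗ[ZMod 2] Qt p H where
  toFun := psi0Fun hH p
  map_update_add' := by
    intro dec v i x y
    set O := othersSpan v i with hO
    have hOW : O ≤ W := othersSpan_le_W v i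
    have hOlt : Module.finrank (ZMod 2) ↥O < p := othersSpan_rank_lt v i
    rw [psi0Fun_update hH v i (x + y), psi0Fun_update hH v i x, psi0Fun_update hH v i y]
    rw [Submodule.coe_add]
    by_cases hx : (x : V) ∈ O <;> by_cases hy : (y : V) ∈ O
    · -- both in O
      have hxy : (x : V) + (y : V) ∈ O := O.add_mem hx hy
      have e1 : Submodule.span (ZMod 2) {(x : V) + (y : V)} ⊔ O = O :=
        sup_eq_right.2 ((Submodule.span_le).2 (Set.singleton_subset_iff.2 hxy))
      have e2 : Submodule.span (ZMod 2) {(x : V)} ⊔ O = O :=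
        sup_eq_right.2 ((Submodule.span_le).2 (Set.singleton_subset_iff.2 hx))
      have e3 : Submodule.span (ZMod 2) {(y : V)} ⊔ O = O :=
        sup_eq_right.2 ((Submodule.span_le).2 (Set.singleton_subset_iff.2 hy))
      rw [e1, e2, e3, qcl_rank_ne hH hOlt.ne]
      rw [add_zero]
    · -- x ∈ O, y ∉ O
      have hxy : (x : V) + (y : V) ∉ O := fun h => hy (by
        have : (y : V) = (x : V) + ((x : V) + (y : V)) := by
          rw [← add_assoc, addself, zero_add]
        rw [this]; exact O.add_mem hx h)
      have e1 : Submodule.span (ZMod 2) {(x : V) + (y : V)} ⊔ O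
          = Submodule.span (ZMod 2) {(y : V)} ⊔ O := by
        refine le_antisymm (sup_le ?_ le_sup_right) (sup_le ?_ le_sup_right)
        · rw [Submodule.span_le, Set.singleton_subset_iff]
          exact Submodule.add_mem _ (Submodule.mem_sup_right hx)
            (Submodule.mem_sup_left (Submodule.mem_span_singleton_self _))
        · rw [Submodule.span_le, Set.singleton_subset_iff]
          have h' : (x : V) + ((x : V) + (y : V)) ∈
              Submodule.span (ZMod 2) {(x : V) + (y : V)} ⊔ O :=
            Submodule.add_mem _ (Submodule.mem_sup_right hx)
              (Submodule.mem_sup_left (Submodule.mem_span_singleton_self _))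
          rwa [show (x : V) + ((x : V) + (y : V)) = (y : V) by
            rw [← add_assoc, addself, zero_add]] at h'
      have e2 : Submodule.span (ZMod 2) {(x : V)} ⊔ O = O :=
        sup_eq_right.2 ((Submodule.span_le).2 (Set.singleton_subset_iff.2 hx))
      rw [e1, e2, qcl_rank_ne hH hOlt.ne, zero_add]
    · -- x ∉ O, y ∈ O
      have e1 : Submodule.span (ZMod 2) {(x : V) + (y : V)} ⊔ O
          = Submodule.span (ZMod 2) {(x : V)} ⊔ O := by
        refine le_antisymm (sup_le ?_ le_sup_right) (sup_le ?_ le_sup_right)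
        · rw [Submodule.span_le, Set.singleton_subset_iff]
          exact Submodule.add_mem _
            (Submodule.mem_sup_left (Submodule.mem_span_singleton_self _))
            (Submodule.mem_sup_right hy)
        · rw [Submodule.span_le, Set.singleton_subset_iff]
          have h' : ((x : V) + (y : V)) + (y : V) ∈
              Submodule.span (ZMod 2) {(x : V) + (y : V)} ⊔ O :=
            Submodule.add_mem _
              (Submodule.mem_sup_left (Submodule.mem_span_singleton_self _))
              (Submodule.mem_sup_right hy)
          rwa [show ((x : V) + (y : V)) + (y : V) = (x : V) by
            rw [add_assoc, addself, add_zero]] at h'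
      have e3 : Submodule.span (ZMod 2) {(y : V)} ⊔ O = O :=
        sup_eq_right.2 ((Submodule.span_le).2 (Set.singleton_subset_iff.2 hy))
      rw [e1, e3, qcl_rank_ne hH hOlt.ne, add_zero]
    · -- x ∉ O, y ∉ O
      by_cases hxy : (x : V) + (y : V) ∈ O
      · -- x + y ∈ O : left side vanishes, right sides are equal
        have e1 : Submodule.span (ZMod 2) {(x : V) + (y : V)} ⊔ O = O :=
          sup_eq_right.2 ((Submodule.span_le).2 (Set.singleton_subset_iff.2 hxy))
        have e2 : Submodule.span (ZMod 2) {(x : V)} ⊔ O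
            = Submodule.span (ZMod 2) {(y : V)} ⊔ O := by
          refine le_antisymm (sup_le ?_ le_sup_right) (sup_le ?_ le_sup_right)
          · rw [Submodule.span_le, Set.singleton_subset_iff]
            have : (x : V) = ((x : V) + (y : V)) + (y : V) := by
              rw [add_assoc, addself, add_zero]
            rw [this]
            exact Submodule.add_mem _ (Submodule.mem_sup_right hxy)
              (Submodule.mem_sup_left (Submodule.mem_span_singleton_self _))
          · rw [Submodule.span_le, Set.singleton_subset_iff]
            have : (y : V) = ((x : V) + (y : V)) + (x : V) := by
              rw [add_comm (x : V) (y : V), add_assoc, addself, add_zero]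
            rw [this]
            exact Submodule.add_mem _ (Submodule.mem_sup_right hxy)
              (Submodule.mem_sup_left (Submodule.mem_span_singleton_self _))
        rw [e1, e2, qcl_rank_ne hH hOlt.ne, addself]
      · -- generic case : use the three-term relation
        by_cases hr : Module.finrank (ZMod 2) ↥O = p - 1
        · have hp : 0 < p := i.pos
          have rx : Module.finrank (ZMod 2) ↥(Submodule.span (ZMod 2) {(x : V)} ⊔ O) = p := by
            rw [finrank_sup_span_singleton hx, hr, Nat.sub_add_cancel hp]
          have ry : Module.finrank (ZMod 2) ↥(Submodule.span (ZMod 2) {(y : V)} ⊔ O) = p := by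
            rw [finrank_sup_span_singleton hy, hr, Nat.sub_add_cancel hp]
          have rxy : Module.finrank (ZMod 2)
              ↥(Submodule.span (ZMod 2) {(x : V) + (y : V)} ⊔ O) = p := by
            rw [finrank_sup_span_singleton hxy, hr, Nat.sub_add_cancel hp]
          have hxW : (x : V) ∈ W := x.2
          have hyW : (y : V) ∈ W := y.2
          have lx : Submodule.span (ZMod 2) {(x : V)} ⊔ O ≤ W :=
            sup_le ((Submodule.span_le).2 (Set.singleton_subset_iff.2 hxW)) hOW
          have ly : Submodule.span (ZMod 2) {(y : V)} ⊔ O ≤ W :=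
            sup_le ((Submodule.span_le).2 (Set.singleton_subset_iff.2 hyW)) hOW
          have lxy : Submodule.span (ZMod 2) {(x : V) + (y : V)} ⊔ O ≤ W :=
            sup_le ((Submodule.span_le).2 (Set.singleton_subset_iff.2 (W.add_mem hxW hyW))) hOW
          rw [qcl_eq hH rxy lxy, qcl_eq hH rx lx, qcl_eq hH ry ly]
          rw [← Submodule.Quotient.mk_add, Submodule.Quotient.eq]
          rw [Submodule.mem_comap]
          have hsub : ∀ u1 u2 : ↥(Kp p H), ((u1 - u2 : ↥(Kp p H)) : V → ZMod 2)
              = (u1 : V → ZMod 2) + (u2 : V → ZMod 2) := by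
            intro u1 u2
            rw [sub_eq_add_neg, neg_eq_self']
            rfl
          rw [Submodule.coe_subtype, hsub]
          have hT : wvec (flat a (Submodule.span (ZMod 2) {(x:V) + (y:V)} ⊔ O))
              + (wvec (flat a (Submodule.span (ZMod 2) {(x:V)} ⊔ O))
                + wvec (flat a (Submodule.span (ZMod 2) {(y:V)} ⊔ O)))
              = wvec (flat a (Submodule.span (ZMod 2) {(x:V)}
                  ⊔ (Submodule.span (ZMod 2) {(y:V)} ⊔ O))) := by
            rw [← add_assoc]
            exact three_term hx hy hxy a
          show wvec (flat a (Submodule.span (ZMod 2) {(x:V) + (y:V)} ⊔ O))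
              + (wvec (flat a (Submodule.span (ZMod 2) {(x:V)} ⊔ O))
                + wvec (flat a (Submodule.span (ZMod 2) {(y:V)} ⊔ O))) ∈ Kp (p+1) H
          rw [hT]
          have hry : Module.finrank (ZMod 2)
              ↥(Submodule.span (ZMod 2) {(y : V)} ⊔ O) = p := ry
          have hxnot : (x : V) ∉ Submodule.span (ZMod 2) {(y : V)} ⊔ O := by
            rw [mem_sup_span_iff]
            rintro (h | h)
            · exact hx h
            · exact hxy h
          have rT : Module.finrank (ZMod 2)
              ↥(Submodule.span (ZMod 2) {(x : V)}
                ⊔ (Submodule.span (ZMod 2) {(y : V)} ⊔ O)) = p + 1 := by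
            rw [finrank_sup_span_singleton hxnot, hry]
          have lT : Submodule.span (ZMod 2) {(x : V)}
              ⊔ (Submodule.span (ZMod 2) {(y : V)} ⊔ O) ≤ W :=
            sup_le ((Submodule.span_le).2 (Set.singleton_subset_iff.2 hxW)) ly
          exact gen_mem hH rT (flat_subset_H hH (a_mem_H hH) lT)
        · -- rank of O too small : everything vanishes
          have hz : ∀ z : V, z ∉ O →
              Module.finrank (ZMod 2) ↥(Submodule.span (ZMod 2) {z} ⊔ O) ≠ p := by
            intro z hzO h
            rw [finrank_sup_span_singleton hzO] at h
            exact hr (by omega)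
          rw [qcl_rank_ne hH (hz _ hxy), qcl_rank_ne hH (hz _ hx), qcl_rank_ne hH (hz _ hy),
            add_zero]
  map_update_smul' := by
    intro dec v i c x
    rcases zmod2_cases c with rfl | rfl
    · rw [zero_smul, zero_smul]
      rw [psi0Fun_update hH v i 0]
      have : ((0 : ↥W) : V) = 0 := rfl
      rw [this, Submodule.span_zero_singleton, bot_sup_eq]
      exact qcl_rank_ne hH (othersSpan_rank_lt v i).ne
    · rw [one_smul, one_smul]
  map_eq_zero_of_eq' := by
    intro v i j hvij hij
    have hrange : (Set.range fun k : Fin p => ((v k : ↥W) : V))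
        = Set.range (fun k : {k : Fin p // k ≠ j} => ((v k : ↥W) : V)) := by
      ext w
      constructor
      · rintro ⟨k, rfl⟩
        by_cases hk : k = j
        · subst hk
          exact ⟨⟨i, hij⟩, congrArg Subtype.val hvij⟩
        · exact ⟨⟨k, hk⟩, rfl⟩
      · rintro ⟨k, rfl⟩
        exact ⟨k, rfl⟩
    show psi0Fun hH p v = 0
    rw [psi0Fun, hrange]
    refine qcl_rank_ne hH ?_
    have h := finrank_span_range_le (fun k : {k : Fin p // k ≠ j} => ((v k : ↥W) : V))
      (le_of_eq (card_ne_sub p j))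
    exact (lt_of_le_of_lt h (Nat.sub_lt i.pos one_pos)).ne

noncomputable def Lmap (hH : H = flat a W) (p : ℕ) :
    ExteriorAlgebra (ZMod 2) ↥W →ₗ[ZMod 2] Qt p H :=
  ExteriorAlgebra.liftAlternating (fun i => if h : p = i then h ▸ psi0 hH p else 0)

lemma Lmap_iMulti (hH : H = flat a W) (p : ℕ) (v : Fin p → ↥W) :
    Lmap hH p (ExteriorAlgebra.ιMulti (ZMod 2) p v) = psi0Fun hH p v := by
  rw [Lmap, ExteriorAlgebra.liftAlternating_apply_ιMulti, dif_pos rfl]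
  rfl

section Dual

variable {d : ℕ}

def msum (e : Fin d → ↥W) (T : Finset (Fin d)) : V := ∑ i ∈ T, ((e i : ↥W) : V)

noncomputable def Dmap (b : V) (e : Fin d → ↥W) (S : Finset (Fin d)) :
    (V → ZMod 2) →ₗ[ZMod 2] ZMod 2 :=
  ∑ T ∈ Sᶜ.powerset, (LinearMap.proj (b + msum e T) : (V → ZMod 2) →ₗ[ZMod 2] ZMod 2)

lemma Dmap_apply (b : V) (e : Fin d → ↥W) (S : Finset (Fin d)) (f : V → ZMod 2) :
    Dmap b e S f = ∑ T ∈ Sᶜ.powerset, f (b + msum e T) := by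
  simp [Dmap, LinearMap.sum_apply, LinearMap.proj_apply]

noncomputable def WSel (p : ℕ) (e : Fin d → ↥W) (S : Finset (Fin d)) :
    ↥(⋀[ZMod 2]^p ↥W) :=
  if h : S.card = p then
    ⟨ExteriorAlgebra.ιMulti (ZMod 2) p (fun j => e (S.orderIsoOfFin h j)),
      ExteriorAlgebra.ιMulti_range (ZMod 2) p ⟨_, rfl⟩⟩
  else 0

noncomputable def Phi (p : ℕ) (b : V) (e : Fin d → ↥W) :
    (V → ZMod 2) →ₗ[ZMod 2] ↥(⋀[ZMod 2]^p ↥W) :=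
  ∑ S : Finset (Fin d), (Dmap b e S).smulRight (WSel p e S)

lemma Phi_apply (p : ℕ) (b : V) (e : Fin d → ↥W) (f : V → ZMod 2) :
    Phi p b e f = ∑ S : Finset (Fin d), Dmap b e S f • WSel p e S := by
  simp [Phi, LinearMap.sum_apply, LinearMap.smulRight_apply]

lemma msum_symmDiff (e : Fin d → ↥W) (T T₁ : Finset (Fin d)) :
    msum e (T ∆ T₁) = msum e T + msum e T₁ := by
  classical
  have h1 : msum e (T ∆ T₁) = msum e (T \ T₁) + msum e (T₁ \ T) := by
    rw [msum, symmDiff_def, show (T \ T₁ ⊔ T₁ \ T : Finset (Fin d)) = T \ T₁ ∪ T₁ \ T from rfl, Finset.sum_union disjoint_sdiff_sdiff]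
    rfl
  have h2 : msum e (T \ T₁) + msum e (T ∩ T₁) = msum e T := by
    rw [msum, msum, msum, ← Finset.sdiff_inter_self_left T T₁]
    exact Finset.sum_sdiff (Finset.inter_subset_left)
  have h3 : msum e (T₁ \ T) + msum e (T ∩ T₁) = msum e T₁ := by
    rw [msum, msum, msum, Finset.inter_comm, ← Finset.sdiff_inter_self_left T₁ T]
    exact Finset.sum_sdiff (Finset.inter_subset_left)
  have e2 : msum e (T \ T₁) = msum e T + msum e (T ∩ T₁) := by
    rw [← h2, add_assoc, addself, add_zero]
  have e3 : msum e (T₁ \ T) = msum e T₁ + msum e (T ∩ T₁) := by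
    rw [← h3, add_assoc, addself, add_zero]
  rw [h1, e2, e3, add_add_add_comm, addself, add_zero]

lemma sum_ind_zero (e : Fin d → ↥W) {U : Submodule (ZMod 2) V} (c : V)
    (S T₁ : Finset (Fin d)) (h₁ : T₁ ⊆ Sᶜ) (hne : T₁.Nonempty) (hm : msum e T₁ ∈ U) :
    ∑ T ∈ Sᶜ.powerset, (if msum e T + c ∈ U then (1 : ZMod 2) else 0) = 0 := by
  refine Finset.sum_involution (fun T _ => T ∆ T₁) ?_ ?_ ?_ ?_
  · intro T hT
    have hiff : msum e (T ∆ T₁) + c ∈ U ↔ msum e T + c ∈ U := by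
      rw [msum_symmDiff, add_right_comm]
      constructor
      · intro h
        have h' := U.add_mem h hm
        rwa [add_assoc, addself, add_zero] at h'
      · intro h
        exact U.add_mem h hm
    by_cases h : msum e T + c ∈ U
    · rw [if_pos h, if_pos (hiff.2 h)]; decide
    · rw [if_neg h, if_neg (fun hc => h (hiff.1 hc))]; decide
  · intro T hT hf
    intro hc
    rw [symmDiff_eq_left] at hc
    exact hne.ne_empty hc
  · intro T hT
    rw [Finset.mem_powerset] at hT ⊢
    exact le_trans symmDiff_le_sup (sup_le hT h₁)
  · intro T hT
    exact symmDiff_symmDiff_cancel_right (a := T₁) (b := T)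

lemma exists_dep (hW : Module.finrank (ZMod 2) W = d) (e : Fin d → ↥W)
    {U : Submodule (ZMod 2) V} (hUW : U ≤ W) {p : ℕ}
    (hU : Module.finrank (ZMod 2) U = p + 1) (S : Finset (Fin d)) (hS : S.card = p) :
    ∃ T₁ : Finset (Fin d), T₁ ⊆ Sᶜ ∧ T₁.Nonempty ∧ msum e T₁ ∈ U := by
  classical
  set U₀ : Submodule (ZMod 2) ↥W := U.comap W.subtype with hU₀
  have hU₀rk : Module.finrank (ZMod 2) ↥U₀ = p + 1 := by
    rw [(Submodule.comapSubtypeEquivOfLe hUW).finrank_eq, hU]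
  have hq := Submodule.finrank_quotient_add_finrank U₀
  rw [hU₀rk, hW] at hq
  have hni : ¬ LinearIndependent (ZMod 2)
      (fun i : {i // i ∈ Sᶜ} => Submodule.Quotient.mk (p := U₀) (e (i : Fin d))) := by
    intro h
    have hc := h.fintype_card_le_finrank
    rw [Fintype.card_coe, Finset.card_compl, Fintype.card_fin, hS] at hc
    omega
  obtain ⟨c, hcsum, i₀, hi₀⟩ := Fintype.not_linearIndependent_iff.1 hni
  refine ⟨(Finset.univ.filter (fun i : {i // i ∈ Sᶜ} => c i ≠ 0)).image Subtype.val,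
    ?_, ?_, ?_⟩
  · intro j hj
    obtain ⟨i, _, rfl⟩ := Finset.mem_image.1 hj
    exact i.2
  · exact ⟨i₀.val, Finset.mem_image_of_mem _ (Finset.mem_filter.2 ⟨Finset.mem_univ _, hi₀⟩)⟩
  · set F := Finset.univ.filter (fun i : {i // i ∈ Sᶜ} => c i ≠ 0) with hF
    have hmsum : msum e (F.image Subtype.val)
        = ((∑ i ∈ F, e (i : Fin d) : ↥W) : V) := by
      rw [msum, Finset.sum_image (fun x _ y _ h => Subtype.val_injective h)]
      exact (map_sum W.subtype _ F).symm
    rw [hmsum]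
    have hsW : (∑ i ∈ F, e (i : Fin d) : ↥W) ∈ U₀ := by
      rw [← Submodule.Quotient.mk_eq_zero]
      have h1 : (Submodule.Quotient.mk (∑ i ∈ F, e (i : Fin d)) : ↥W ⧸ U₀)
          = ∑ i ∈ F, Submodule.Quotient.mk (p := U₀) (e (i : Fin d)) := by
        rw [← Submodule.mkQ_apply, map_sum]
        simp [Submodule.mkQ_apply]
      have h2 : ∑ i ∈ F, Submodule.Quotient.mk (p := U₀) (e (i : Fin d))
          = ∑ i : {i // i ∈ Sᶜ}, c i • Submodule.Quotient.mk (p := U₀) (e (i : Fin d)) := by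
        rw [hF, Finset.sum_filter]
        refine Finset.sum_congr rfl fun i _ => ?_
        rcases zmod2_cases (c i) with h | h <;> simp [h]
      rw [h1, h2, hcsum]
    exact hsW
def US (e : Fin d → ↥W) (S : Finset (Fin d)) : Submodule (ZMod 2) V :=
  Submodule.span (ZMod 2) (Set.range fun i : {i // i ∈ S} => ((e (i : Fin d) : ↥W) : V))

lemma US_le_W (e : Fin d → ↥W) (S : Finset (Fin d)) : US e S ≤ W := by
  rw [US, Submodule.span_le]
  rintro _ ⟨i, rfl⟩
  exact (e (i : Fin d)).2

lemma Dmap_wvec (e : Fin d → ↥W) (S : Finset (Fin d)) (b : V) (U : Submodule (ZMod 2) V) :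
    Dmap a e S (wvec (flat b U))
      = ∑ T ∈ Sᶜ.powerset, (if msum e T + (a + b) ∈ U then (1 : ZMod 2) else 0) := by
  rw [Dmap_apply]
  refine Finset.sum_congr rfl fun T _ => ?_
  rw [wvec_apply]
  have h : a + msum e T ∈ flat b U ↔ msum e T + (a + b) ∈ U := by
    rw [mem_flat, show b + (a + msum e T) = msum e T + (a + b) by abel]
  exact if_congr h rfl rfl

lemma msum_not_mem (e : Basis (Fin d) (ZMod 2) ↥W) {S T : Finset (Fin d)}
    (hTS : T ⊆ Sᶜ) (hTne : T.Nonempty) : msum (⇑e) T ∉ US (⇑e) S := by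
  intro hmem
  obtain ⟨i₀, hi₀⟩ := hTne
  have hUSeq : US (⇑e) S = Submodule.map W.subtype
      (Submodule.span (ZMod 2) (⇑e '' ↑S)) := by
    calc US (⇑e) S
        = Submodule.span (ZMod 2)
            (Set.range (W.subtype ∘ fun i : {i // i ∈ S} => e (i : Fin d))) := rfl
      _ = Submodule.span (ZMod 2)
            (W.subtype '' (Set.range fun i : {i // i ∈ S} => e (i : Fin d))) := by
          rw [Set.range_comp]
      _ = Submodule.span (ZMod 2) (W.subtype '' (⇑e '' ↑S)) := by
          congr 1
          ext w
          constructor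
          · rintro ⟨y, ⟨i, rfl⟩, rfl⟩
            exact ⟨e (i : Fin d), ⟨(i : Fin d), i.2, rfl⟩, rfl⟩
          · rintro ⟨y, ⟨j, hj, rfl⟩, rfl⟩
            exact ⟨e j, ⟨⟨j, hj⟩, rfl⟩, rfl⟩
      _ = Submodule.map W.subtype (Submodule.span (ZMod 2) (⇑e '' ↑S)) := by
          rw [Submodule.span_image]
  have hWmem : (∑ i ∈ T, e i : ↥W) ∈ Submodule.span (ZMod 2) (⇑e '' ↑S) := by
    rw [hUSeq] at hmem
    have hco : msum (⇑e) T = W.subtype (∑ i ∈ T, e i) := (map_sum W.subtype _ T).symm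
    rw [hco] at hmem
    rcases hmem with ⟨w, hw, hweq⟩
    obtain rfl : w = ∑ i ∈ T, e i := Submodule.injective_subtype W hweq
    exact hw
  have hsupp := (Basis.mem_span_image e).1 hWmem
  have hrepr : e.repr (∑ i ∈ T, e i) i₀ = 1 := by
    rw [map_sum, Finsupp.finset_sum_apply]
    have h1 : ∀ i ∈ T, (e.repr (e i)) i₀ = if i = i₀ then (1 : ZMod 2) else 0 := by
      intro i _
      rw [Basis.repr_self, Finsupp.single_apply]
    rw [Finset.sum_congr rfl h1, Finset.sum_ite_eq' T i₀ (fun _ => (1 : ZMod 2)),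
      if_pos hi₀]
  have hi₀S : i₀ ∈ S := hsupp (Finsupp.mem_support_iff.2 (by rw [hrepr]; exact one_ne_zero))
  exact (Finset.mem_compl.1 (hTS hi₀)) hi₀S

lemma Dmap_self (e : Basis (Fin d) (ZMod 2) ↥W) (S : Finset (Fin d)) :
    Dmap a (⇑e) S (wvec (flat a (US (⇑e) S))) = 1 := by
  rw [Dmap_wvec]
  rw [Finset.sum_eq_single_of_mem ∅ (Finset.mem_powerset.2 (Finset.empty_subset _)) ?_]
  · rw [if_pos (by
      rw [show msum (⇑e) ∅ + (a + a) = 0 by rw [msum, Finset.sum_empty, zero_add, addself]]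
      exact Submodule.zero_mem _)]
  · intro T hT hTne
    rw [if_neg]
    rw [addself, add_zero]
    exact msum_not_mem e (Finset.mem_powerset.1 hT) (Finset.nonempty_of_ne_empty hTne)

lemma Dmap_other {p : ℕ} (e : Basis (Fin d) (ZMod 2) ↥W) {S S' : Finset (Fin d)}
    (hS : S.card = p) (hS' : S'.card = p) (hne : S' ≠ S) :
    Dmap a (⇑e) S' (wvec (flat a (US (⇑e) S))) = 0 := by
  have hns : ¬ S ⊆ S' := fun h =>
    hne (Finset.eq_of_subset_of_card_le h (by rw [hS, hS'])).symm
  obtain ⟨i₀, hi₀S, hi₀S'⟩ := Finset.not_subset.1 hns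
  rw [Dmap_wvec]
  exact sum_ind_zero (⇑e) (a + a) S' {i₀}
    (Finset.singleton_subset_iff.2 (Finset.mem_compl.2 hi₀S'))
    (Finset.singleton_nonempty _)
    (by rw [msum, Finset.sum_singleton]; exact Submodule.subset_span ⟨⟨i₀, hi₀S⟩, rfl⟩)

lemma Phi_vanish (hH : H = flat a W) (hW : Module.finrank (ZMod 2) W = d)
    (e : Basis (Fin d) (ZMod 2) ↥W) (p : ℕ) :
    Kp (p + 1) H ≤ LinearMap.ker (Phi p a (⇑e)) := by
  rw [Kp, Submodule.span_le]
  rintro _ ⟨G, ⟨b, U, hU, rfl⟩, hsub, rfl⟩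
  rw [SetLike.mem_coe, LinearMap.mem_ker]
  have hsub : flat b U ⊆ H := hsub
  change Phi p a (⇑e) (wvec (flat b U)) = 0
  rw [Phi_apply]
  refine Finset.sum_eq_zero fun S _ => ?_
  by_cases hS : S.card = p
  · obtain ⟨T₁, h1, h2, h3⟩ := exists_dep hW (⇑e) (direction_le hH hsub).2 hU S hS
    rw [Dmap_wvec, sum_ind_zero (⇑e) (a + b) S T₁ h1 h2 h3, zero_smul]
  · rw [WSel, dif_neg hS, smul_zero]

lemma Phi_special (e : Basis (Fin d) (ZMod 2) ↥W) (p : ℕ) {S : Finset (Fin d)}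
    (hS : S.card = p) :
    Phi p a (⇑e) (wvec (flat a (US (⇑e) S))) = WSel p (⇑e) S := by
  rw [Phi_apply]
  rw [Finset.sum_eq_single_of_mem S (Finset.mem_univ S) ?_]
  · rw [Dmap_self e S, one_smul]
  · intro S' _ hne
    by_cases hS' : S'.card = p
    · rw [Dmap_other e hS hS' hne, zero_smul]
    · rw [WSel, dif_neg hS', smul_zero]

lemma span_wedge (e : Basis (Fin d) (ZMod 2) ↥W) (p : ℕ) :
    (⋀[ZMod 2]^p ↥W) ≤ Submodule.span (ZMod 2)
      (Set.range fun S : Finset (Fin d) =>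
        ((WSel p (⇑e) S : ↥(⋀[ZMod 2]^p ↥W)) : ExteriorAlgebra (ZMod 2) ↥W)) := by
  classical
  refine le_trans (le_of_eq (ExteriorAlgebra.ιMulti_span_fixedDegree (ZMod 2) p).symm)
    (Submodule.span_le.2 ?_)
  rintro _ ⟨v, rfl⟩
  have hv : (fun i : Fin p => v i) = fun i => ∑ j : Fin d, e.repr (v i) j • e j := by
    funext i
    exact (e.sum_repr (v i)).symm
  have hexp : ExteriorAlgebra.ιMulti (ZMod 2) p v
      = ∑ r : Fin p → Fin d, (∏ i, e.repr (v i) (r i)) •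
          ExteriorAlgebra.ιMulti (ZMod 2) p (fun i => e (r i)) := by
    calc ExteriorAlgebra.ιMulti (ZMod 2) p v
        = (ExteriorAlgebra.ιMulti (ZMod 2) p).toMultilinearMap
            (fun i => ∑ j : Fin d, e.repr (v i) j • e j) := by
          rw [AlternatingMap.coe_multilinearMap]
          exact congrArg _ hv
      _ = ∑ r : Fin p → Fin d, (ExteriorAlgebra.ιMulti (ZMod 2) p).toMultilinearMap
            (fun i => e.repr (v i) (r i) • e (r i)) := by
          rw [MultilinearMap.map_sum]
      _ = ∑ r : Fin p → Fin d, (∏ i, e.repr (v i) (r i)) •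
            ExteriorAlgebra.ιMulti (ZMod 2) p (fun i => e (r i)) := by
          refine Finset.sum_congr rfl fun r _ => ?_
          rw [MultilinearMap.map_smul_univ]
          rw [AlternatingMap.coe_multilinearMap]
  rw [hexp]
  refine Submodule.sum_mem _ fun r _ => Submodule.smul_mem _ _ ?_
  by_cases hr : Function.Injective r
  · set S : Finset (Fin d) := Finset.univ.image r with hSdef
    have hcS : S.card = p := by
      rw [hSdef, Finset.card_image_of_injective _ hr, Finset.card_univ, Fintype.card_fin]
    have hbij : Function.Bijective (fun i : Fin p =>
        (⟨r i, Finset.mem_image_of_mem r (Finset.mem_univ i)⟩ : {x // x ∈ S})) := by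
      rw [Fintype.bijective_iff_injective_and_card]
      refine ⟨fun i j h => hr (congrArg Subtype.val h), ?_⟩
      rw [Fintype.card_fin, Fintype.card_coe, hcS]
    set σ : Fin p ≃ Fin p :=
      (Equiv.ofBijective _ hbij).trans (S.orderIsoOfFin hcS).toEquiv.symm with hσ
    have hfam : (fun i => e (r i)) = (fun j => e ((S.orderIsoOfFin hcS) j)) ∘ σ := by
      funext i
      show e (r i) = e ((S.orderIsoOfFin hcS) (σ i))
      congr 1
      have : (S.orderIsoOfFin hcS) (σ i)
          = (Equiv.ofBijective _ hbij) i := by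
        rw [hσ]
        simp
      rw [this]
      rfl
    have hWSel : ((WSel p (⇑e) S : ↥(⋀[ZMod 2]^p ↥W)) : ExteriorAlgebra (ZMod 2) ↥W)
        = ExteriorAlgebra.ιMulti (ZMod 2) p (fun j => e ((S.orderIsoOfFin hcS) j)) := by
      rw [WSel, dif_pos hcS]
    have hmem : ExteriorAlgebra.ιMulti (ZMod 2) p (fun j => e ((S.orderIsoOfFin hcS) j))
        ∈ Submodule.span (ZMod 2) (Set.range fun S : Finset (Fin d) =>
          ((WSel p (⇑e) S : ↥(⋀[ZMod 2]^p ↥W)) : ExteriorAlgebra (ZMod 2) ↥W)) := by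
      exact Submodule.subset_span ⟨S, hWSel⟩
    rw [hfam, AlternatingMap.map_perm]
    rcases Int.units_eq_one_or (Equiv.Perm.sign σ) with h | h <;> rw [h]
    · rw [one_smul]; exact hmem
    · rw [Units.smul_def]
      have : ((-1 : ℤˣ) : ℤ) = -1 := rfl
      rw [this, neg_one_zsmul]
      exact Submodule.neg_mem _ hmem
  · obtain ⟨i, j, hij, hne⟩ := Function.not_injective_iff.1 hr
    have hz : ExteriorAlgebra.ιMulti (ZMod 2) p (fun i => e (r i)) = 0 :=
      AlternatingMap.map_eq_zero_of_eq _ _ (by rw [hij]) hne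
    rw [hz]
    exact Submodule.zero_mem _

end Dual

lemma coe_sub_eq_add {p : ℕ} {H : Set V} (u1 u2 : ↥(Kp p H)) :
    ((u1 - u2 : ↥(Kp p H)) : V → ZMod 2) = (u1 : V → ZMod 2) + (u2 : V → ZMod 2) := by
  rw [sub_eq_add_neg, neg_eq_self']
  rfl

lemma Lmap_gen (hH : H = flat a W) (p : ℕ) {b : V} {U : Submodule (ZMod 2) V}
    (hU : Module.finrank (ZMod 2) U = p) (hUW : U ≤ W) (hsub : flat b U ⊆ H)
    (w : Fin p → ↥W)
    (hspan : Submodule.span (ZMod 2) (Set.range fun i => ((w i : ↥W) : V)) = U)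
    (hf : wvec (flat b U) ∈ Kp p H) :
    psi0Fun hH p w = Submodule.Quotient.mk ⟨wvec (flat b U), hf⟩ := by
  rw [psi0Fun, hspan, qcl_eq hH hU hUW, Submodule.Quotient.eq, Submodule.mem_comap]
  have hc : ((Kp p H).subtype
      ((⟨wvec (flat a U), gen_mem hH hU (flat_subset_H hH (a_mem_H hH) hUW)⟩ : ↥(Kp p H))
        - ⟨wvec (flat b U), hf⟩))
      = wvec (flat a U) + wvec (flat b U) := coe_sub_eq_add _ _
  rw [hc]
  exact translate_mem hH hU (flat_subset_H hH (a_mem_H hH) hUW) hsub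

noncomputable def PsiLin (hH : H = flat a W) (p : ℕ) :
    ↥(⋀[ZMod 2]^p ↥W) →ₗ[ZMod 2] Qt p H :=
  (Lmap hH p).comp (Submodule.subtype _)

lemma PsiLin_iMulti (hH : H = flat a W) (p : ℕ) (w : Fin p → ↥W)
    (hmem : ExteriorAlgebra.ιMulti (ZMod 2) p w ∈ ⋀[ZMod 2]^p ↥W) :
    PsiLin hH p ⟨ExteriorAlgebra.ιMulti (ZMod 2) p w, hmem⟩ = psi0Fun hH p w := by
  show Lmap hH p (ExteriorAlgebra.ιMulti (ZMod 2) p w) = psi0Fun hH p w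
  exact Lmap_iMulti hH p w

section WithBasis

variable {d : ℕ}

lemma US_rank (e : Basis (Fin d) (ZMod 2) ↥W) (S : Finset (Fin d)) :
    Module.finrank (ZMod 2) ↥(US (⇑e) S) = S.card := by
  have h1 : LinearIndependent (ZMod 2) (fun i : Fin d => ((e i : ↥W) : V)) :=
    e.linearIndependent.map' W.subtype (Submodule.ker_subtype W)
  have hind : LinearIndependent (ZMod 2)
      (fun i : {i // i ∈ S} => ((e (i : Fin d) : ↥W) : V)) :=
    h1.comp Subtype.val Subtype.val_injective
  rw [US, finrank_span_eq_card hind, Fintype.card_coe]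

lemma range_orderIso (e : Basis (Fin d) (ZMod 2) ↥W) {p : ℕ} (S : Finset (Fin d))
    (h : S.card = p) :
    (Set.range fun j : Fin p => ((e ((S.orderIsoOfFin h j : Fin d)) : ↥W) : V))
      = (Set.range fun i : {i // i ∈ S} => ((e (i : Fin d) : ↥W) : V)) := by
  ext w
  constructor
  · rintro ⟨j, rfl⟩
    exact ⟨S.orderIsoOfFin h j, rfl⟩
  · rintro ⟨i, rfl⟩
    refine ⟨(S.orderIsoOfFin h).symm i, ?_⟩
    show ((e (((S.orderIsoOfFin h) ((S.orderIsoOfFin h).symm i) : Fin d)) : ↥W) : V) = _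
    rw [OrderIso.apply_symm_apply]

noncomputable def PhiQ (hH : H = flat a W) (hW : Module.finrank (ZMod 2) W = d)
    (e : Basis (Fin d) (ZMod 2) ↥W) (p : ℕ) :
    Qt p H →ₗ[ZMod 2] ↥(⋀[ZMod 2]^p ↥W) :=
  Submodule.liftQ _ ((Phi p a (⇑e)).comp (Kp p H).subtype) (by
    intro x hx
    rw [LinearMap.mem_ker, LinearMap.comp_apply]
    exact (Phi_vanish hH hW e p) (Submodule.mem_comap.1 hx))

lemma PhiQ_mk (hH : H = flat a W) (hW : Module.finrank (ZMod 2) W = d)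
    (e : Basis (Fin d) (ZMod 2) ↥W) (p : ℕ) (y : ↥(Kp p H)) :
    PhiQ hH hW e p (Submodule.Quotient.mk y) = Phi p a (⇑e) (y : V → ZMod 2) :=
  Submodule.liftQ_apply _ _ _

lemma PsiLin_inj (hH : H = flat a W) (hW : Module.finrank (ZMod 2) W = d)
    (e : Basis (Fin d) (ZMod 2) ↥W) (p : ℕ) :
    Function.Injective (PsiLin hH p (W := W)) := by
  rw [← LinearMap.ker_eq_bot]
  rw [LinearMap.ker_eq_bot']
  intro x hx
  set A : ExteriorAlgebra (ZMod 2) ↥W →ₗ[ZMod 2] ExteriorAlgebra (ZMod 2) ↥W :=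
    (Submodule.subtype _).comp ((PhiQ hH hW e p).comp (Lmap hH p)) with hA
  have hloc : (⋀[ZMod 2]^p ↥W) ≤ LinearMap.eqLocus A LinearMap.id := by
    refine le_trans (span_wedge e p) (Submodule.span_le.2 ?_)
    rintro _ ⟨S, rfl⟩
    by_cases hS : S.card = p
    · have hWSel : ((WSel p (⇑e) S : ↥(⋀[ZMod 2]^p ↥W)) : ExteriorAlgebra (ZMod 2) ↥W)
          = ExteriorAlgebra.ιMulti (ZMod 2) p
              (fun j => e ((S.orderIsoOfFin hS j : Fin d))) := by
        rw [WSel, dif_pos hS]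
      have hUrank : Module.finrank (ZMod 2) ↥(US (⇑e) S) = p := by
        rw [US_rank, hS]
      have hUle : US (⇑e) S ≤ W := US_le_W _ _
      have hgen : wvec (flat a (US (⇑e) S)) ∈ Kp p H :=
        gen_mem hH hUrank (flat_subset_H hH (a_mem_H hH) hUle)
      have hspan : Submodule.span (ZMod 2)
          (Set.range fun j : Fin p =>
            (((fun j => e ((S.orderIsoOfFin hS j : Fin d))) j : ↥W) : V)) = US (⇑e) S := by
        rw [US]
        exact congrArg _ (range_orderIso e S hS)
      have hpsi : psi0Fun hH p (fun j => e ((S.orderIsoOfFin hS j : Fin d)))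
          = Submodule.Quotient.mk ⟨wvec (flat a (US (⇑e) S)), hgen⟩ :=
        Lmap_gen hH p hUrank hUle (flat_subset_H hH (a_mem_H hH) hUle) _ hspan hgen
      show A _ = LinearMap.id _
      rw [hA]
      simp only [LinearMap.comp_apply, LinearMap.id_apply]
      rw [hWSel, Lmap_iMulti, hpsi, PhiQ_mk]
      show ((Phi p a (⇑e) (wvec (flat a (US (⇑e) S))) : ↥(⋀[ZMod 2]^p ↥W))
        : ExteriorAlgebra (ZMod 2) ↥W) = _
      rw [Phi_special e p hS, hWSel]
    · have h0 : ((WSel p (⇑e) S : ↥(⋀[ZMod 2]^p ↥W)) : ExteriorAlgebra (ZMod 2) ↥W) = 0 := by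
        rw [WSel, dif_neg hS]
        rfl
      show A _ = LinearMap.id _
      have h0' : ((fun S : Finset (Fin d) =>
          ((WSel p (⇑e) S : ↥(⋀[ZMod 2]^p ↥W)) : ExteriorAlgebra (ZMod 2) ↥W)) S) = 0 := h0
      rw [h0']
      simp
  have hAx : A (x : ExteriorAlgebra (ZMod 2) ↥W) = (x : ExteriorAlgebra (ZMod 2) ↥W) :=
    hloc x.2
  have hL : Lmap hH p (x : ExteriorAlgebra (ZMod 2) ↥W) = 0 := hx
  have hAx0 : A (x : ExteriorAlgebra (ZMod 2) ↥W) = 0 := by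
    rw [hA]
    simp only [LinearMap.comp_apply]
    rw [hL]
    simp
  exact Subtype.ext (by rw [← hAx, hAx0]; rfl)

lemma PsiLin_surj (hH : H = flat a W) (p : ℕ) :
    Function.Surjective (PsiLin hH p (W := W)) := by
  intro q
  obtain ⟨y, rfl⟩ := Submodule.Quotient.mk_surjective _ q
  have key : ∀ (f : V → ZMod 2)
      (hf : f ∈ Submodule.span (ZMod 2)
        {w | ∃ G : Set V, IsAffineOfDim p G ∧ G ⊆ H ∧ w = wvec G}),
      (Submodule.Quotient.mk (⟨f, hf⟩ : ↥(Kp p H)) : Qt p H)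
        ∈ LinearMap.range (PsiLin hH p (W := W)) := by
    intro f hf
    refine Submodule.span_induction ?_ ?_ ?_ ?_ hf
    · rintro g ⟨G, ⟨b, U, hU, rfl⟩, hsubG, rfl⟩
      have hsub : flat b U ⊆ H := hsubG
      have hUW : U ≤ W := (direction_le hH hsub).2
      haveI : FiniteDimensional (ZMod 2) ↥U := inferInstance
      let B : Basis (Fin p) (ZMod 2) ↥U := finBasisOfFinrankEq (ZMod 2) ↥U hU
      set w : Fin p → ↥W := fun i => ⟨(B i : V), hUW (B i).2⟩ with hw
      have hspan : Submodule.span (ZMod 2) (Set.range fun i => ((w i : ↥W) : V)) = U := by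
        have h1 : (fun i => ((w i : ↥W) : V)) = U.subtype ∘ B := rfl
        rw [h1, Set.range_comp, Submodule.span_image, B.span_eq, Submodule.map_subtype_top]
      refine ⟨⟨ExteriorAlgebra.ιMulti (ZMod 2) p w,
        ExteriorAlgebra.ιMulti_range (ZMod 2) p ⟨w, rfl⟩⟩, ?_⟩
      rw [PsiLin_iMulti]
      exact Lmap_gen hH p hU hUW hsub w hspan _
    · exact ⟨0, by
        rw [map_zero]
        exact ((Submodule.Quotient.mk_eq_zero _).2 (Submodule.zero_mem _)).symm⟩
    · intro f1 g1 hfs hgs ihf ihg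
      show (Submodule.Quotient.mk (⟨f1 + g1, Submodule.add_mem _ hfs hgs⟩ : ↥(Kp p H))
        : Qt p H) ∈ LinearMap.range (PsiLin hH p (W := W))
      rw [show (⟨f1 + g1, Submodule.add_mem _ hfs hgs⟩ : ↥(Kp p H))
          = ⟨f1, hfs⟩ + ⟨g1, hgs⟩ from rfl, Submodule.Quotient.mk_add]
      exact Submodule.add_mem _ ihf ihg
    · intro c f1 hfs ihf
      show (Submodule.Quotient.mk (⟨c • f1, Submodule.smul_mem _ c hfs⟩ : ↥(Kp p H))
        : Qt p H) ∈ LinearMap.range (PsiLin hH p (W := W))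
      rw [show (⟨c • f1, Submodule.smul_mem _ c hfs⟩ : ↥(Kp p H))
          = c • ⟨f1, hfs⟩ from rfl, Submodule.Quotient.mk_smul]
      exact Submodule.smul_mem _ _ ihf
  exact key (y : V → ZMod 2) y.2

end WithBasis

end Fin
end KpProof

/-- For an affine subspace `H = a + W` of dimension `d` in a `Z/2Z`-vector
space `V`, the quotient `K_p(H)/K_{p+1}(H)` is isomorphic to the `p`-th exterior power
`⋀^p T(H)` of the linear subspace `W = T(H)` parallel to `H`, via the map sending the
class of `w_G` (for a `p`-dimensional affine subspace `G = b + U ⊆ H`) to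
`v 1 ∧ ⋯ ∧ v p`, where `v` is a basis of the direction `U = T(G)`. -/
theorem Kp_quotient_iso_exteriorPower {V : Type*} [Fintype V] [AddCommGroup V]
    [Module (ZMod 2) V] (d p : ℕ) (a : V) (W : Submodule (ZMod 2) V)
    (hW : Module.finrank (ZMod 2) W = d) (H : Set V) (hH : H = (a + ·) '' (W : Set V)) :
    ∃ e : (↥(Kp p H) ⧸ (Kp (p + 1) H).comap (Kp p H).subtype) ≃ₗ[ZMod 2]
        ↥(⋀[ZMod 2]^p ↥W),
      ∀ (b : V) (U : Submodule (ZMod 2) V), Module.finrank (ZMod 2) U = p →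
        ∀ (hUW : U ≤ W), (b + ·) '' (U : Set V) ⊆ H →
        ∀ (v : Basis (Fin p) (ZMod 2) U)
          (hmem : wvec ((b + ·) '' (U : Set V)) ∈ Kp p H)
          (hin : ExteriorAlgebra.ιMulti (ZMod 2) p
              (fun i => Submodule.inclusion hUW (v i)) ∈ ⋀[ZMod 2]^p ↥W),
          e (Submodule.Quotient.mk ⟨wvec ((b + ·) '' (U : Set V)), hmem⟩) =
            ⟨ExteriorAlgebra.ιMulti (ZMod 2) p (fun i => Submodule.inclusion hUW (v i)),
              hin⟩ := by
  classical
  have hHf : H = KpProof.flat a W := hH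
  let eb : Basis (Fin d) (ZMod 2) ↥W := Module.finBasisOfFinrankEq (ZMod 2) ↥W hW
  have hinj := KpProof.PsiLin_inj hHf hW eb p
  have hsurj := KpProof.PsiLin_surj hHf p
  refine ⟨(LinearEquiv.ofBijective (KpProof.PsiLin hHf p) ⟨hinj, hsurj⟩).symm, ?_⟩
  intro b U hU hUW hsubH v hmem hin
  rw [LinearEquiv.symm_apply_eq]
  have hE : (LinearEquiv.ofBijective (KpProof.PsiLin hHf p) ⟨hinj, hsurj⟩)
      (⟨ExteriorAlgebra.ιMulti (ZMod 2) p (fun i => Submodule.inclusion hUW (v i)), hin⟩)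
      = KpProof.PsiLin hHf p
        ⟨ExteriorAlgebra.ιMulti (ZMod 2) p (fun i => Submodule.inclusion hUW (v i)), hin⟩ :=
    rfl
  rw [hE, KpProof.PsiLin_iMulti hHf p (fun i => Submodule.inclusion hUW (v i)) hin]
  have hsub : KpProof.flat b U ⊆ H := hsubH
  have hspan : Submodule.span (ZMod 2)
      (Set.range fun i => (((fun i => Submodule.inclusion hUW (v i)) i : ↥W) : V)) = U := by
    have h1 : (fun i => (((fun i => Submodule.inclusion hUW (v i)) i : ↥W) : V))
        = U.subtype ∘ ⇑v := by
      funext i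
      simp [Submodule.coe_inclusion]
    rw [h1, Set.range_comp, Submodule.span_image, Basis.span_eq, Submodule.map_subtype_top]
  exact (KpProof.Lmap_gen hHf p hU hUW hsub _ hspan hmem).symm
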